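/- Let q ≠ 0 and let γ : ℝ → E be the curve with components γ_i(t) = (c_i/q)·sin(qt + d_i) + b_i, γ_{n+i}(t) = -(c_i/q)·cos(qt + d_i) + b_{n+i} (for i = 1,…,n), and γ_{2n+α}(t) = a_α·t + h_α (for α = 1,…,s). Then γ is unit speed (‖γ'(t)‖ = 1 for all t), i.e. a normal magnetic curve, if and only if Σ_{i=1}^{n} c_i² + Σ_{α=1}^{s} a_α² = 1. -/

import Mathlib

open scoped RealInnerProductSpace

/-- The structure tensor `φ` of the standard `C`-manifold structure on `ℝ^{2n+s}`:
`(φv)_i = v_{n+i}`, `(φv)_{n+i} = -v_i` for `0 ≤ i < n`, and `(φv)_{2n+α} = 0`. -/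
noncomputable def phi (n s : ℕ) (v : EuclideanSpace ℝ (Fin (2*n+s))) :
    EuclideanSpace ℝ (Fin (2*n+s)) := WithLp.toLp 2 fun k =>
  if _h1 : (k : ℕ) < n then v ⟨n + (k : ℕ), by omega⟩
  else if _h2 : (k : ℕ) < 2*n then -v ⟨(k : ℕ) - n, by omega⟩
  else 0

/-- The index `2n+α` of the characteristic direction `ξ_α = e_{2n+α}`. -/
def idxA (n s : ℕ) (α : Fin s) : Fin (2*n+s) := ⟨2*n + (α : ℕ), by omega⟩

/-- The index `i` for `1 ≤ i ≤ n` (0-based). -/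
def idxI (n s : ℕ) (i : Fin n) : Fin (2*n+s) := ⟨(i : ℕ), by omega⟩

/-- The index `n+i` for `1 ≤ i ≤ n` (0-based). -/
def idxNI (n s : ℕ) (i : Fin n) : Fin (2*n+s) := ⟨n + (i : ℕ), by omega⟩

/-- The velocity field of the parametrized magnetic curve. -/
noncomputable def vel (n s : ℕ) (q : ℝ) (c d : Fin n → ℝ) (a : Fin s → ℝ) (t : ℝ) :
    EuclideanSpace ℝ (Fin (2*n+s)) := WithLp.toLp 2 fun (k : Fin (2*n+s)) =>
  if h1 : (k : ℕ) < n then c ⟨k, h1⟩ * Real.cos (q * t + d ⟨k, h1⟩)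
  else if h2 : (k : ℕ) < 2*n then
    c ⟨(k:ℕ) - n, by omega⟩ * Real.sin (q * t + d ⟨(k:ℕ) - n, by omega⟩)
  else a ⟨(k:ℕ) - 2*n, by omega⟩

lemma vel_idxI (n s : ℕ) (q : ℝ) (c d : Fin n → ℝ) (a : Fin s → ℝ) (t : ℝ) (i : Fin n) :
    vel n s q c d a t (idxI n s i) = c i * Real.cos (q * t + d i) := by
  have h1 : ((idxI n s i : Fin (2*n+s)) : ℕ) < n := i.isLt
  simp only [vel, WithLp.ofLp_toLp, dif_pos h1]
  have e1 : (⟨((idxI n s i : Fin (2*n+s)) : ℕ), h1⟩ : Fin n) = i := Fin.ext rfl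
  rw [e1]

lemma vel_idxNI (n s : ℕ) (q : ℝ) (c d : Fin n → ℝ) (a : Fin s → ℝ) (t : ℝ) (i : Fin n) :
    vel n s q c d a t (idxNI n s i) = c i * Real.sin (q * t + d i) := by
  have h1 : ¬ (((idxNI n s i : Fin (2*n+s)) : ℕ) < n) := by simp [idxNI]
  have h2 : ((idxNI n s i : Fin (2*n+s)) : ℕ) < 2*n := by simp [idxNI]; omega
  simp only [vel, WithLp.ofLp_toLp, dif_neg h1, dif_pos h2]
  have e1 : (⟨((idxNI n s i : Fin (2*n+s)) : ℕ) - n, by omega⟩ : Fin n) = i := by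
    apply Fin.ext; simp [idxNI]
  rw [e1]

lemma vel_idxA (n s : ℕ) (q : ℝ) (c d : Fin n → ℝ) (a : Fin s → ℝ) (t : ℝ) (α : Fin s) :
    vel n s q c d a t (idxA n s α) = a α := by
  have h1 : ¬ (((idxA n s α : Fin (2*n+s)) : ℕ) < n) := by simp [idxA]; omega
  have h2 : ¬ (((idxA n s α : Fin (2*n+s)) : ℕ) < 2*n) := by simp [idxA]
  simp only [vel, WithLp.ofLp_toLp, dif_neg h1, dif_neg h2]
  have e1 : (⟨((idxA n s α : Fin (2*n+s)) : ℕ) - 2*n, by omega⟩ : Fin s) = α := by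
    apply Fin.ext; simp [idxA]
  rw [e1]

/-- Splitting a sum over `Fin (2*n+s)` into the three index ranges. -/
lemma sum_split (n s : ℕ) (f : Fin (2*n+s) → ℝ) :
    ∑ k, f k = (∑ i : Fin n, f (idxI n s i)) + (∑ i : Fin n, f (idxNI n s i))
      + (∑ α : Fin s, f (idxA n s α)) := by
  have hes : n+n+s = 2*n+s := by ring
  have h0 : ∑ k, f k = ∑ j : Fin (n+n+s), f (finCongr hes j) :=
    (Fintype.sum_equiv (finCongr hes) (fun j => f (finCongr hes j)) f (fun j => rfl)).symm
  rw [h0, Fin.sum_univ_add, Fin.sum_univ_add]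
  have g1 : ∀ i : Fin n, f ((finCongr hes) (Fin.castAdd s (Fin.castAdd n i))) = f (idxI n s i) := by
    intro i; congr 1
  have g2 : ∀ i : Fin n, f ((finCongr hes) (Fin.castAdd s (Fin.natAdd n i))) = f (idxNI n s i) := by
    intro i; congr 1
  have g3 : ∀ α : Fin s, f ((finCongr hes) (Fin.natAdd (n+n) α)) = f (idxA n s α) := by
    intro α; congr 1; apply Fin.ext
    simp only [finCongr_apply, Fin.coe_cast, Fin.coe_natAdd, idxA]
    omega
  simp_rw [g1, g2, g3]

/-- The parametrized magnetic curve in `ℝ^{2n+s}` is unit speed (a normal magnetic curve)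
if and only if `Σ_i c_i² + Σ_α a_α² = 1`. -/
theorem parametrized_curve_unit_speed_iff
    (n s : ℕ) (hn : 0 < n) (hs : 0 < s) (q : ℝ) (hq : q ≠ 0)
    (c d b bb : Fin n → ℝ) (a h : Fin s → ℝ)
    (γ : ℝ → EuclideanSpace ℝ (Fin (2*n+s)))
    (hγ1 : ∀ t : ℝ, ∀ i : Fin n,
      γ t (idxI n s i) = c i / q * Real.sin (q * t + d i) + b i)
    (hγ2 : ∀ t : ℝ, ∀ i : Fin n,
      γ t (idxNI n s i) = -(c i / q) * Real.cos (q * t + d i) + bb i)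
    (hγ3 : ∀ t : ℝ, ∀ α : Fin s, γ t (idxA n s α) = a α * t + h α) :
    (∀ t : ℝ, ‖deriv γ t‖ = 1) ↔
      (∑ i : Fin n, (c i) ^ 2) + (∑ α : Fin s, (a α) ^ 2) = 1 := by
  classical
  have hder : ∀ t, HasDerivAt γ (vel n s q c d a t) t := by
    intro t
    have key : HasDerivAt (fun u => (fun k => γ u k : Fin (2*n+s) → ℝ))
        (fun k => vel n s q c d a t k) t := by
      rw [hasDerivAt_pi]
      intro k
      by_cases h1 : (k : ℕ) < n
      · have hk : idxI n s ⟨k, h1⟩ = k := Fin.ext rfl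
        have hfun : (fun u => γ u k) =
            fun u => c ⟨k, h1⟩ / q * Real.sin (q * u + d ⟨k, h1⟩) + b ⟨k, h1⟩ := by
          funext u
          exact ((congrArg (γ u) hk).symm).trans (hγ1 u ⟨k, h1⟩)
        rw [hfun]
        have hu : HasDerivAt (fun u : ℝ => q * u + d ⟨k, h1⟩) q t := by
          simpa using ((hasDerivAt_id t).const_mul q).add_const (d ⟨k, h1⟩)
        have hD := (((Real.hasDerivAt_sin (q * t + d ⟨k, h1⟩)).comp t hu).const_mul
          (c ⟨k, h1⟩ / q)).add_const (b ⟨k, h1⟩)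
        convert hD using 1
        · rfl
        simp only [vel, WithLp.ofLp_toLp, dif_pos h1, Function.comp]
        field_simp
      · by_cases h2 : (k : ℕ) < 2*n
        · have hkn : n ≤ (k : ℕ) := le_of_not_gt h1
          have hk : idxNI n s ⟨(k:ℕ) - n, by omega⟩ = k := by
            apply Fin.ext; simp [idxNI]; omega
          have hfun : (fun u => γ u k) =
              fun u => -(c ⟨(k:ℕ) - n, by omega⟩ / q) *
                Real.cos (q * u + d ⟨(k:ℕ) - n, by omega⟩) + bb ⟨(k:ℕ) - n, by omega⟩ := by
            funext u
            exact ((congrArg (γ u) hk).symm).trans (hγ2 u ⟨(k:ℕ) - n, by omega⟩)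
          rw [hfun]
          have hu : HasDerivAt (fun u : ℝ => q * u + d ⟨(k:ℕ) - n, by omega⟩) q t := by
            simpa using ((hasDerivAt_id t).const_mul q).add_const (d ⟨(k:ℕ) - n, by omega⟩)
          have hD := (((Real.hasDerivAt_cos (q * t + d ⟨(k:ℕ) - n, by omega⟩)).comp t hu).const_mul
            (-(c ⟨(k:ℕ) - n, by omega⟩ / q))).add_const (bb ⟨(k:ℕ) - n, by omega⟩)
          convert hD using 1
          · rfl
          simp only [vel, WithLp.ofLp_toLp, dif_neg h1, dif_pos h2, Function.comp]
          field_simp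
        · have hk : idxA n s ⟨(k:ℕ) - 2*n, by omega⟩ = k := by
            apply Fin.ext; simp [idxA]; omega
          have hfun : (fun u => γ u k) =
              fun u => a ⟨(k:ℕ) - 2*n, by omega⟩ * u + h ⟨(k:ℕ) - 2*n, by omega⟩ := by
            funext u
            exact ((congrArg (γ u) hk).symm).trans (hγ3 u ⟨(k:ℕ) - 2*n, by omega⟩)
          rw [hfun]
          have hD : HasDerivAt (fun u : ℝ => a ⟨(k:ℕ) - 2*n, by omega⟩ * u
              + h ⟨(k:ℕ) - 2*n, by omega⟩) (a ⟨(k:ℕ) - 2*n, by omega⟩) t := by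
            simpa using ((hasDerivAt_id t).const_mul (a ⟨(k:ℕ) - 2*n, by omega⟩)).add_const
              (h ⟨(k:ℕ) - 2*n, by omega⟩)
          convert hD using 1
          · rfl
          · rfl
          simp only [vel, WithLp.ofLp_toLp, dif_neg h1, dif_neg h2]
    exact (EuclideanSpace.equiv (Fin (2*n+s)) ℝ).symm.toContinuousLinearMap.hasFDerivAt.comp_hasDerivAt
      t key
  have hnorm : ∀ t, ‖deriv γ t‖ ^ 2 =
      (∑ i : Fin n, (c i) ^ 2) + (∑ α : Fin s, (a α) ^ 2) := by
    intro t
    rw [(hder t).deriv]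
    rw [EuclideanSpace.norm_eq, Real.sq_sqrt (by positivity)]
    have habs : ∀ k, ‖vel n s q c d a t k‖ ^ 2 = (vel n s q c d a t k) ^ 2 :=
      fun k => sq_abs _
    simp_rw [habs]
    rw [sum_split n s (fun k => (vel n s q c d a t k) ^ 2)]
    simp_rw [vel_idxI, vel_idxNI, vel_idxA]
    rw [← Finset.sum_add_distrib]
    congr 1
    apply Finset.sum_congr rfl
    intro i _
    have hsc := Real.sin_sq_add_cos_sq (q * t + d i)
    nlinarith [hsc]
  constructor
  · intro hone
    have h0 := hnorm 0
    rw [hone 0, one_pow] at h0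
    linarith
  · intro hsum t
    have h2 := hnorm t
    rw [hsum] at h2
    rw [← Real.sqrt_one, ← h2, Real.sqrt_sq (norm_nonneg _)]
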